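/- For every t ≥ 0, P(σ_1 + σ_2 + ⋯ + σ_N > t/κ) ≤ e^{−t}/(1 − (e^{κT} − 1)). -/

import Mathlib

open MeasureTheory

/-- Lemma 6.1: if `σ_1, σ_2, …` are i.i.d. exponential of rate `κ`, `T > 0` with
`e^{κT} − 1 < 1`, and `N = min{i ≥ 1 : σ_i > T}`, then
`P(σ_1 + ⋯ + σ_N > t/κ) ≤ e^{−t}/(1 − (e^{κT} − 1))` for all `t ≥ 0`. -/
theorem sum_until_first_long_exponential
    {Ω : Type*} [MeasurableSpace Ω] (P : Measure Ω) [IsProbabilityMeasure P]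
    (κ T : ℝ) (hκ : 0 < κ) (hT : 0 < T)
    (hκT : Real.exp (κ * T) - 1 < 1)
    (σ : ℕ → Ω → ℝ) (hmeas : ∀ i, Measurable (σ i))
    (hindep : ProbabilityTheory.iIndepFun σ P)
    (hexp : ∀ i : ℕ, ∀ s : ℝ,
      P {ω | s < σ i ω} = ENNReal.ofReal (Real.exp (-(κ * max s 0))))
    (t : ℝ) (ht : 0 ≤ t) :
    P {ω | ∃ n : ℕ, 1 ≤ n ∧ (∀ i, 1 ≤ i → i < n → σ i ω ≤ T) ∧ T < σ n ω ∧
        t / κ < ∑ i ∈ Finset.Icc 1 n, σ i ω}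
      ≤ ENNReal.ofReal (Real.exp (-t) / (1 - (Real.exp (κ * T) - 1))) := by
  classical
  set r : ℝ := Real.exp (κ * T) - 1 with hrdef
  have hr0 : 0 ≤ r := by
    have h := Real.one_le_exp (le_of_lt (mul_pos hκ hT))
    rw [hrdef]; linarith
  have hr1 : r < 1 := hκT
  set m : ℕ → ℝ := fun k => max T (t/κ - k*T) with hmdef
  have hmT : ∀ k, T ≤ m k := fun k => le_max_left _ _
  set C : ℕ → Set Ω := fun k =>
    {ω | (∀ i, 1 ≤ i → i ≤ k → σ i ω ≤ T) ∧ m k < σ (k+1) ω} with hCdef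
  -- Step A : inclusion
  have hsub : {ω | ∃ n : ℕ, 1 ≤ n ∧ (∀ i, 1 ≤ i → i < n → σ i ω ≤ T) ∧ T < σ n ω ∧
      t / κ < ∑ i ∈ Finset.Icc 1 n, σ i ω} ⊆ ⋃ k, C k := by
    rintro ω ⟨n, hn1, hle, hTn, hsum⟩
    obtain ⟨k, rfl⟩ : ∃ k, n = k + 1 := ⟨n - 1, (Nat.succ_pred_eq_of_pos hn1).symm⟩
    refine Set.mem_iUnion.2 ⟨k, ?_, ?_⟩
    · intro i hi1 hik
      exact hle i hi1 (Nat.lt_succ_of_le hik)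
    · have hsplit : ∑ i ∈ Finset.Icc 1 (k+1), σ i ω
          = (∑ i ∈ Finset.Icc 1 k, σ i ω) + σ (k+1) ω :=
        Finset.sum_Icc_succ_top (Nat.one_le_iff_ne_zero.mpr (Nat.succ_ne_zero k)) _
      have hbound : ∑ i ∈ Finset.Icc 1 k, σ i ω ≤ k * T := by
        calc ∑ i ∈ Finset.Icc 1 k, σ i ω ≤ ∑ i ∈ Finset.Icc 1 k, T := by
              refine Finset.sum_le_sum fun i hi => ?_
              rw [Finset.mem_Icc] at hi
              exact hle i hi.1 (Nat.lt_succ_of_le hi.2)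
          _ = k * T := by rw [Finset.sum_const, Nat.card_Icc]; simp [nsmul_eq_mul]
      have h2 : t/κ - k*T < σ (k+1) ω := by
        have := hsum
        rw [hsplit] at this
        linarith
      exact max_lt hTn h2
  -- measure of each C k
  have hCk : ∀ k, P (C k) ≤ ENNReal.ofReal (Real.exp (-t) * r ^ k) := by
    intro k
    set sets : ℕ → Set ℝ := fun i => if i = k + 1 then Set.Ioi (m k) else Set.Iic T with hsets
    have hCeq : C k = ⋂ i ∈ Finset.Icc 1 (k+1), σ i ⁻¹' sets i := by
      ext ω
      simp only [hCdef, Set.mem_setOf_eq, Set.mem_iInter, Set.mem_preimage, Finset.mem_Icc]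
      constructor
      · rintro ⟨h1, h2⟩ i ⟨hi1, hi2⟩
        by_cases hik : i = k + 1
        · simp [hsets, hik, h2]
        · have : i ≤ k := Nat.lt_succ_iff.mp (lt_of_le_of_ne hi2 hik)
          simp [hsets, hik, h1 i hi1 this]
      · intro h
        constructor
        · intro i hi1 hik
          have := h i ⟨hi1, Nat.le_succ_of_le hik⟩
          simp [hsets, Nat.ne_of_lt (Nat.lt_succ_of_le hik)] at this
          exact this
        · have := h (k+1) ⟨Nat.succ_le_succ (Nat.zero_le k), le_refl _⟩
          simpa [hsets] using this
    have hmsets : ∀ i, i ∈ Finset.Icc 1 (k+1) → MeasurableSet (sets i) := by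
      intro i _
      by_cases hik : i = k + 1 <;> simp [hsets, hik, measurableSet_Ioi, measurableSet_Iic]
    have hprod := hindep.measure_inter_preimage_eq_mul (Finset.Icc 1 (k+1)) hmsets
    rw [hCeq, hprod]
    -- compute factors
    have hIic : ∀ i, P (σ i ⁻¹' Set.Iic T) = ENNReal.ofReal (1 - Real.exp (-(κ*T))) := by
      intro i
      have hc : σ i ⁻¹' Set.Iic T = {ω | T < σ i ω}ᶜ := by
        ext ω; simp [not_lt]
      have hms : MeasurableSet {ω | T < σ i ω} := measurableSet_lt measurable_const (hmeas i)
      rw [hc, measure_compl hms (measure_ne_top _ _), hexp i T, measure_univ,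
        max_eq_left hT.le]
      rw [← ENNReal.ofReal_one, ← ENNReal.ofReal_sub _ (Real.exp_nonneg _)]
    have hIoi : P (σ (k+1) ⁻¹' Set.Ioi (m k)) = ENNReal.ofReal (Real.exp (-(κ * m k))) := by
      have : σ (k+1) ⁻¹' Set.Ioi (m k) = {ω | m k < σ (k+1) ω} := rfl
      rw [this, hexp, max_eq_left (le_trans hT.le (hmT k))]
    have hsplit : (∏ i ∈ Finset.Icc 1 (k+1), P (σ i ⁻¹' sets i))
        = (∏ i ∈ Finset.Icc 1 k, P (σ i ⁻¹' sets i)) * P (σ (k+1) ⁻¹' sets (k+1)) :=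
      Finset.prod_Icc_succ_top (Nat.one_le_iff_ne_zero.mpr (Nat.succ_ne_zero k)) _
    rw [hsplit]
    have hfac : ∀ i ∈ Finset.Icc 1 k, P (σ i ⁻¹' sets i)
        = ENNReal.ofReal (1 - Real.exp (-(κ*T))) := by
      intro i hi
      rw [Finset.mem_Icc] at hi
      have hik : i ≠ k + 1 := Nat.ne_of_lt (Nat.lt_succ_of_le hi.2)
      simp only [hsets, if_neg hik]
      exact hIic i
    rw [Finset.prod_congr rfl hfac, Finset.prod_const, Nat.card_Icc]
    simp only [hsets, if_pos rfl, Nat.add_sub_cancel]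
    rw [hIoi, ← ENNReal.ofReal_pow (by
      have := Real.exp_nonneg (-(κ*T))
      have h1 : Real.exp (-(κ*T)) ≤ 1 := Real.exp_le_one_iff.mpr (by nlinarith)
      linarith), ← ENNReal.ofReal_mul (pow_nonneg (by
      have h1 : Real.exp (-(κ*T)) ≤ 1 := Real.exp_le_one_iff.mpr (by nlinarith)
      linarith) k)]
    apply ENNReal.ofReal_le_ofReal
    have hmlow : t/κ - k*T ≤ m k := le_max_right _ _
    have hexp_le : Real.exp (-(κ * m k)) ≤ Real.exp (-(t - k*(κ*T))) := by
      apply Real.exp_le_exp.mpr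
      have : κ * (t/κ - k*T) ≤ κ * m k := by nlinarith
      have hdiv : κ * (t/κ) = t := by field_simp
      nlinarith [this]
    calc (1 - Real.exp (-(κ*T))) ^ k * Real.exp (-(κ * m k))
        ≤ (1 - Real.exp (-(κ*T))) ^ k * Real.exp (-(t - k*(κ*T))) := by
          apply mul_le_mul_of_nonneg_left hexp_le
          apply pow_nonneg
          have : Real.exp (-(κ*T)) ≤ 1 := Real.exp_le_one_iff.mpr (by nlinarith)
          linarith
      _ = Real.exp (-t) * r ^ k := by
          rw [hrdef]
          have h1 : Real.exp (-(t - k*(κ*T))) = Real.exp (-t) * Real.exp (κ*T) ^ k := by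
            rw [← Real.exp_nat_mul, ← Real.exp_add]
            ring_nf
          have h3 : (1 - Real.exp (-(κ*T))) * Real.exp (κ*T) = Real.exp (κ*T) - 1 := by
            rw [sub_mul, one_mul, ← Real.exp_add]
            simp
          have h4 : (Real.exp (κ*T) - 1) ^ k
              = (1 - Real.exp (-(κ*T))) ^ k * Real.exp (κ*T) ^ k := by
            rw [← mul_pow, h3]
          rw [h1, h4]; ring
  -- combine
  calc P _ ≤ P (⋃ k, C k) := measure_mono hsub
    _ ≤ ∑' k, P (C k) := measure_iUnion_le _
    _ ≤ ∑' k, ENNReal.ofReal (Real.exp (-t) * r ^ k) := ENNReal.tsum_le_tsum hCk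
    _ = ENNReal.ofReal (∑' k, Real.exp (-t) * r ^ k) := by
        rw [ENNReal.ofReal_tsum_of_nonneg (fun k => by positivity)]
        exact (summable_geometric_of_lt_one hr0 hr1).mul_left _
    _ = ENNReal.ofReal (Real.exp (-t) / (1 - r)) := by
        rw [tsum_mul_left, tsum_geometric_of_lt_one hr0 hr1, div_eq_mul_inv]
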